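/- Let p, q be integers with p ≥ 2 and q ≥ 2, and let E' ⊆ {1,…,p} × {1,…,q} be the (p,q)-broom edge set, ordered by the lexicographic order on pairs (first by the left index, then by the right index). Then any two edges that are consecutive in this order share an endpoint: if e = (i, j) and e' = (i', j') are both in E', e < e' lexicographically, and no element of E' lies strictly between them, then i = i' or j = j'. -/

import Mathlib

/-- `f i = ⌊((i-1)(q-1))/(p-1)⌋ + 1`, floor taken over the rationals. -/
def broomF (p q i : ℤ) : ℤ := ⌊(((i : ℚ) - 1) * ((q : ℚ) - 1)) / ((p : ℚ) - 1)⌋ + 1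

/-- `g j = ⌈((j-1)(p-1))/(q-1)⌉`, ceiling taken over the rationals. -/
def broomG (p q j : ℤ) : ℤ := ⌈(((j : ℚ) - 1) * ((p : ℚ) - 1)) / ((q : ℚ) - 1)⌉

/-- The `(p,q)`-broom edge set, as a set of index pairs in `{1,…,p} × {1,…,q}`. -/
def broomEdges (p q : ℤ) : Set (ℤ × ℤ) :=
  {e | (1 ≤ e.1 ∧ e.1 ≤ p ∧ e.2 = broomF p q e.1) ∨
       (2 ≤ e.2 ∧ e.2 ≤ q ∧ e.1 = broomG p q e.2)}

/-- The lexicographic (strict) order on pairs: first coordinates compared first,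
ties broken by second coordinates. -/
def lexLt (e e' : ℤ × ℤ) : Prop :=
  e.1 < e'.1 ∨ (e.1 = e'.1 ∧ e.2 < e'.2)

section helpers

lemma hP (p : ℤ) (hp : 2 ≤ p) : (0:ℚ) < (p:ℚ) - 1 := by
  have : (2:ℚ) ≤ (p:ℚ) := by exact_mod_cast hp
  linarith

lemma hQ (q : ℤ) (hq : 2 ≤ q) : (0:ℚ) < (q:ℚ) - 1 := by
  have : (2:ℚ) ≤ (q:ℚ) := by exact_mod_cast hq
  linarith

lemma broomF_mono (p q : ℤ) (hp : 2 ≤ p) (hq : 2 ≤ q) {i i' : ℤ} (h : i ≤ i') : broomF p q i ≤ broomF p q i' := by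
  unfold broomF
  have hP' := hP p hp
  have hQ' := hQ q hq
  have hii : ((i:ℚ) - 1) * ((q:ℚ) - 1) ≤ ((i':ℚ) - 1) * ((q:ℚ) - 1) := by
    have : (i:ℚ) ≤ (i':ℚ) := by exact_mod_cast h
    nlinarith
  have := Int.floor_le_floor (R := ℚ)
    (div_le_div_of_nonneg_right hii hP'.le |>.trans_eq rfl)
  omega

lemma broomG_mono (p q : ℤ) (hp : 2 ≤ p) (hq : 2 ≤ q) {j j' : ℤ} (h : j ≤ j') : broomG p q j ≤ broomG p q j' := by
  unfold broomG
  have hP' := hP p hp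
  have hQ' := hQ q hq
  have hjj : ((j:ℚ) - 1) * ((p:ℚ) - 1) ≤ ((j':ℚ) - 1) * ((p:ℚ) - 1) := by
    have : (j:ℚ) ≤ (j':ℚ) := by exact_mod_cast h
    nlinarith
  exact Int.ceil_le_ceil (div_le_div_of_nonneg_right hjj hQ'.le)

lemma broomF_pos (p q : ℤ) (hp : 2 ≤ p) (hq : 2 ≤ q) {i : ℤ} (hi : 1 ≤ i) : 1 ≤ broomF p q i := by
  unfold broomF
  have hP' := hP p hp
  have hQ' := hQ q hq
  have : (0:ℚ) ≤ (((i:ℚ) - 1) * ((q:ℚ) - 1)) / ((p:ℚ) - 1) := by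
    apply div_nonneg _ hP'.le
    have : (1:ℚ) ≤ (i:ℚ) := by exact_mod_cast hi
    nlinarith
  have := Int.floor_nonneg.mpr this
  omega

lemma broomF_le_q (p q : ℤ) (hp : 2 ≤ p) (hq : 2 ≤ q) {i : ℤ} (hi : i ≤ p) : broomF p q i ≤ q := by
  unfold broomF
  have hP' := hP p hp
  have hQ' := hQ q hq
  have hle : (((i:ℚ) - 1) * ((q:ℚ) - 1)) / ((p:ℚ) - 1) ≤ (q:ℚ) - 1 := by
    rw [div_le_iff₀ hP']
    have : (i:ℚ) ≤ (p:ℚ) := by exact_mod_cast hi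
    nlinarith
  have : ⌊(((i:ℚ) - 1) * ((q:ℚ) - 1)) / ((p:ℚ) - 1)⌋ ≤ q - 1 := by
    have h2 := (Int.floor_le (((i:ℚ) - 1) * ((q:ℚ) - 1) / ((p:ℚ) - 1))).trans hle
    exact_mod_cast (by push_cast; linarith [h2] : ((⌊(((i:ℚ) - 1) * ((q:ℚ) - 1)) / ((p:ℚ) - 1)⌋ : ℚ)) ≤ ((q - 1 : ℤ) : ℚ))
  omega

lemma broomG_pos (p q : ℤ) (hp : 2 ≤ p) (hq : 2 ≤ q) {j : ℤ} (hj : 2 ≤ j) : 1 ≤ broomG p q j := by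
  unfold broomG
  have hP' := hP p hp
  have hQ' := hQ q hq
  refine Int.ceil_pos.mpr ?_
  apply div_pos _ hQ'
  have : (2:ℚ) ≤ (j:ℚ) := by exact_mod_cast hj
  nlinarith

lemma broomG_le (p q : ℤ) (hp : 2 ≤ p) (hq : 2 ≤ q) {j : ℤ} (hj : j ≤ q) : broomG p q j ≤ p - 1 := by
  unfold broomG
  have hP' := hP p hp
  have hQ' := hQ q hq
  rw [Int.ceil_le]
  rw [div_le_iff₀ hQ']
  have : (j:ℚ) ≤ (q:ℚ) := by exact_mod_cast hj
  push_cast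
  nlinarith

/-- f(g(j)) ≤ j - 1 -/
lemma fg_le (p q : ℤ) (hp : 2 ≤ p) (hq : 2 ≤ q) (j : ℤ) : broomF p q (broomG p q j) ≤ j - 1 := by
  have hP' := hP p hp
  have hQ' := hQ q hq
  set g := broomG p q j with hg
  have h1 : (g:ℚ) - 1 < ((j:ℚ) - 1) * ((p:ℚ) - 1) / ((q:ℚ) - 1) := by
    have := Int.ceil_lt_add_one (((j:ℚ) - 1) * ((p:ℚ) - 1) / ((q:ℚ) - 1))
    rw [hg]; unfold broomG; linarith
  have h2 : ((g:ℚ) - 1) * ((q:ℚ) - 1) < ((j:ℚ) - 1) * ((p:ℚ) - 1) := by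
    rw [lt_div_iff₀ hQ'] at h1; linarith
  have h3 : ((g:ℚ) - 1) * ((q:ℚ) - 1) / ((p:ℚ) - 1) < (j:ℚ) - 1 := by
    rw [div_lt_iff₀ hP']; nlinarith
  have h4 : ⌊((g:ℚ) - 1) * ((q:ℚ) - 1) / ((p:ℚ) - 1)⌋ < j - 1 := by
    apply Int.floor_lt.mpr; push_cast; linarith
  unfold broomF
  omega

/-- g(f(i)) ≤ i - 1 -/
lemma gf_le (p q : ℤ) (hp : 2 ≤ p) (hq : 2 ≤ q) (i : ℤ) : broomG p q (broomF p q i) ≤ i - 1 := by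
  have hP' := hP p hp
  have hQ' := hQ q hq
  set f := broomF p q i with hf
  have h1 : (f:ℚ) - 1 ≤ ((i:ℚ) - 1) * ((q:ℚ) - 1) / ((p:ℚ) - 1) := by
    have := Int.floor_le (((i:ℚ) - 1) * ((q:ℚ) - 1) / ((p:ℚ) - 1))
    rw [hf]; unfold broomF; push_cast; linarith
  have h2 : ((f:ℚ) - 1) * ((p:ℚ) - 1) ≤ ((i:ℚ) - 1) * ((q:ℚ) - 1) := by
    rw [le_div_iff₀ hP'] at h1; linarith
  have h3 : ((f:ℚ) - 1) * ((p:ℚ) - 1) / ((q:ℚ) - 1) ≤ (i:ℚ) - 1 := by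
    rw [div_le_iff₀ hQ']; nlinarith
  unfold broomG
  rw [Int.ceil_le]
  push_cast
  convert h3 using 2 <;> ring_nf
  
/-- i ≤ g(f(i) + 1) -/
lemma gf_ge (p q : ℤ) (hp : 2 ≤ p) (hq : 2 ≤ q) (i : ℤ) : i ≤ broomG p q (broomF p q i + 1) := by
  have hP' := hP p hp
  have hQ' := hQ q hq
  set f := broomF p q i with hf
  have h1 : ((i:ℚ) - 1) * ((q:ℚ) - 1) / ((p:ℚ) - 1) < (f:ℚ) := by
    have := Int.lt_floor_add_one (((i:ℚ) - 1) * ((q:ℚ) - 1) / ((p:ℚ) - 1))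
    rw [hf]; unfold broomF; push_cast; linarith
  have h2 : ((i:ℚ) - 1) * ((q:ℚ) - 1) < (f:ℚ) * ((p:ℚ) - 1) := by
    rw [div_lt_iff₀ hP'] at h1; linarith
  have h3 : (i:ℚ) - 1 < (f:ℚ) * ((p:ℚ) - 1) / ((q:ℚ) - 1) := by
    rw [lt_div_iff₀ hQ']; nlinarith
  unfold broomG
  have h4 : i - 1 < ⌈(((f:ℤ) + 1 : ℤ) - 1 : ℚ) * ((p:ℚ) - 1) / ((q:ℚ) - 1)⌉ := by
    apply Int.lt_ceil.mpr
    push_cast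
    have e : ((f:ℚ) + 1 - 1) = (f:ℚ) := by ring
    rw [e]
    push_cast at h3
    linarith
  push_cast at h4 ⊢
  omega
end helpers
lemma mem_A (p q : ℤ) {i : ℤ} (h1 : 1 ≤ i) (h2 : i ≤ p) :
    (i, broomF p q i) ∈ broomEdges p q := Or.inl ⟨h1, h2, rfl⟩

lemma mem_B (p q : ℤ) {j : ℤ} (h1 : 2 ≤ j) (h2 : j ≤ q) :
    (broomG p q j, j) ∈ broomEdges p q := Or.inr ⟨h1, h2, rfl⟩


/-- two broom edges that are consecutive in the lexicographic order
share an endpoint. -/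
theorem broom_consecutive_share_endpoint (p q : ℤ) (hp : 2 ≤ p) (hq : 2 ≤ q)
    (e e' : ℤ × ℤ) (he : e ∈ broomEdges p q) (he' : e' ∈ broomEdges p q)
    (hlt : lexLt e e')
    (hbetween : ∀ e'' ∈ broomEdges p q, ¬ (lexLt e e'' ∧ lexLt e'' e')) :
    e.1 = e'.1 ∨ e.2 = e'.2 := by
  obtain ⟨i, j⟩ := e
  obtain ⟨i', j'⟩ := e'
  simp only [broomEdges, Set.mem_setOf_eq] at he he'
  simp only [lexLt] at hlt
  simp only
  by_contra hcon
  push_neg at hcon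
  obtain ⟨hii, hjj⟩ := hcon
  have hi_lt : i < i' := by
    rcases hlt with h | ⟨h, _⟩
    · exact h
    · exact absurd h hii
  have h1i : 1 ≤ i := by
    rcases he with ⟨h, _, _⟩ | ⟨h2j, _, hgi⟩
    · exact h
    · rw [hgi]; exact broomG_pos p q hp hq h2j
  have hi'p : i' ≤ p := by
    rcases he' with ⟨_, h, _⟩ | ⟨_, hjq, hgi⟩
    · exact h
    · rw [hgi]; have := broomG_le p q hp hq hjq; omega
  have hbet : ∀ a b : ℤ, (a, b) ∈ broomEdges p q →
      (i < a ∨ (i = a ∧ j < b)) → (a < i' ∨ (a = i' ∧ b < j')) → False := by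
    intro a b h1 h2 h3
    exact hbetween (a, b) h1 ⟨h2, h3⟩
  -- Step 1: j' = f(i')
  have hj' : j' = broomF p q i' := by
    rcases he' with ⟨_, _, h⟩ | ⟨h2, hq', hg⟩
    · exact h
    · exfalso
      have hf : broomF p q i' < j' := by
        have h := fg_le p q hp hq j'
        rw [← hg] at h
        omega
      exact hbet i' (broomF p q i') (mem_A p q (by omega) hi'p)
        (Or.inl hi_lt) (Or.inr ⟨rfl, hf⟩)
  -- Step 2: i' = i + 1
  have hi1p : i + 1 ≤ p := by omega
  have hii' : i' = i + 1 := by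
    by_contra h
    have h2 : i + 1 < i' := by omega
    exact hbet (i + 1) (broomF p q (i + 1)) (mem_A p q (by omega) hi1p)
      (Or.inl (by omega)) (Or.inl h2)
  subst hii'
  -- Step 3
  rcases he with ⟨_, _, hjf⟩ | ⟨h2j, hjq, hig⟩
  · -- e is of type A : j = f(i)
    have hmono : broomF p q i ≤ broomF p q (i + 1) := broomF_mono p q hp hq (by omega)
    have hne : broomF p q i ≠ broomF p q (i + 1) := by
      intro h
      apply hjj
      rw [hjf, hj', h]
    have hlt2 : broomF p q i + 1 ≤ broomF p q (i + 1) := by omega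
    set m := broomF p q i + 1 with hm
    have hm2 : 2 ≤ m := by
      have := broomF_pos p q hp hq h1i; omega
    have hmq : m ≤ q := le_trans hlt2 (broomF_le_q p q hp hq hi1p)
    have hgm_ge : i ≤ broomG p q m := gf_ge p q hp hq i
    have hgm_le : broomG p q m ≤ i := by
      have h1 : broomG p q m ≤ broomG p q (broomF p q (i + 1)) :=
        broomG_mono p q hp hq hlt2
      have h2 := gf_le p q hp hq (i + 1)
      omega
    have hgm : broomG p q m = i := le_antisymm hgm_le hgm_ge
    apply hbet (broomG p q m) m (mem_B p q hm2 hmq)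
    · right; exact ⟨hgm.symm, by omega⟩
    · left; omega
  · -- e is of type B : i = g(j)
    have hj'q : j' ≤ q := by rw [hj']; exact broomF_le_q p q hp hq hi'p
    rcases lt_trichotomy j j' with h | h | h
    · -- j < j'
      have hj1 : j + 1 ≤ j' := by omega
      have hg1_le : broomG p q (j + 1) ≤ i := by
        have h1 : broomG p q (j + 1) ≤ broomG p q j' := broomG_mono p q hp hq hj1
        have h2 : broomG p q j' ≤ i := by
          rw [hj']
          have := gf_le p q hp hq (i + 1); omega
        omega
      have hg1_ge : i ≤ broomG p q (j + 1) := by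
        have := broomG_mono p q hp hq (show j ≤ j + 1 by omega)
        omega
      have hg1 : broomG p q (j + 1) = i := le_antisymm hg1_le hg1_ge
      apply hbet (broomG p q (j + 1)) (j + 1) (mem_B p q (by omega) (by omega))
      · right; exact ⟨hg1.symm, by omega⟩
      · left; omega
    · exact hjj h
    · -- j' < j : contradiction
      have h1 : i + 1 ≤ broomG p q (broomF p q (i + 1) + 1) := gf_ge p q hp hq (i + 1)
      have h2 : broomG p q (broomF p q (i + 1) + 1) ≤ broomG p q j := by
        apply broomG_mono p q hp hq
        omega
      omega
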